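/- Let Λ > 0, a₀ > 0 and a₁ > √(2Λ/(3a₀)). Then: (a) there exists a twice continuously differentiable function a : [0,∞) → (0,∞) with a(0) = a₀, a'(0) = a₁ and a(t)²a''(t) = −Λ/3 for all t ≥ 0; and (b) every twice differentiable a : [0,∞) → (0,∞) with a(0) = a₀, a'(0) = a₁ and a(t)²a''(t) = −Λ/3 for all t ≥ 0 satisfies lim_{t→∞} a(t)/t = (a₁² − 2Λ/(3a₀))^{1/2} > 0; in particular a(t) ∼ c₁(1 + c₂t) as t → ∞ for some positive constants c₁, c₂. -/

import Mathlib

open Real Set Filter Topology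


lemma exists_solution (Λ a₀ a₁ : ℝ) (hΛ : 0 < Λ) (ha₀ : 0 < a₀)
    (ha₁ : Real.sqrt (2 * Λ / (3 * a₀)) < a₁) :
    (∃ a a' a'' : ℝ → ℝ,
      a 0 = a₀ ∧ a' 0 = a₁ ∧
      ContinuousOn a'' (Ici 0) ∧
      ∀ t ∈ Ici (0 : ℝ),
        0 < a t ∧
        HasDerivWithinAt a (a' t) (Ici 0) t ∧
        HasDerivWithinAt a' (a'' t) (Ici 0) t ∧
        (a t) ^ 2 * a'' t = -Λ / 3) := by
  have hβ : 0 < Λ / 3 := by linarith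
  set β := Λ / 3 with hβdef
  have ha₁pos : 0 < a₁ := lt_of_le_of_lt (Real.sqrt_nonneg _) ha₁
  have hfrac : 0 < 2 * Λ / (3 * a₀) := by positivity
  have hK : 0 < a₁ ^ 2 - 2 * Λ / (3 * a₀) := by
    have := Real.sq_sqrt hfrac.le
    nlinarith [Real.sqrt_nonneg (2 * Λ / (3 * a₀))]
  set K : ℝ := a₁ ^ 2 - 2 * Λ / (3 * a₀) with hKdef
  have hKfrac : K + 2 * β / a₀ = a₁ ^ 2 := by
    rw [hKdef, hβdef]
    field_simp
    ring
  -- the function g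
  set g : ℝ → ℝ := fun s => (Real.sqrt (K + 2 * β / max s a₀))⁻¹ with hgdef
  have hmax_pos : ∀ s : ℝ, 0 < max s a₀ := fun s => lt_of_lt_of_le ha₀ (le_max_right _ _)
  have hinner_pos : ∀ s : ℝ, 0 < K + 2 * β / max s a₀ := by
    intro s
    exact add_pos hK (by positivity)
  have hg_pos : ∀ s : ℝ, 0 < g s := by
    intro s
    exact inv_pos.2 (Real.sqrt_pos.2 (hinner_pos s))
  have hg_cont : Continuous g := by
    apply Continuous.inv₀
    · exact Real.continuous_sqrt.comp (continuous_const.add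
        (continuous_const.div (continuous_id.max continuous_const)
          (fun s => (hmax_pos s).ne')))
    · exact fun s => (Real.sqrt_pos.2 (hinner_pos s)).ne'
  -- bounds on g
  set m : ℝ := (Real.sqrt (K + 2 * β / a₀))⁻¹ with hmdef
  have hm_pos : 0 < m := inv_pos.2 (Real.sqrt_pos.2 (add_pos hK (by positivity)))
  have hg_ge : ∀ s : ℝ, m ≤ g s := by
    intro s
    apply inv_anti₀ (Real.sqrt_pos.2 (hinner_pos s))
    apply Real.sqrt_le_sqrt
    apply add_le_add_right
    exact div_le_div_of_nonneg_left (by positivity) ha₀ (le_max_right _ _)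
  -- F = integral of g
  set F : ℝ → ℝ := fun x => ∫ s in a₀..x, g s with hFdef
  have hF_deriv : ∀ x : ℝ, HasDerivAt F (g x) x := by
    intro x
    exact intervalIntegral.integral_hasDerivAt_right
      (hg_cont.intervalIntegrable _ _)
      (hg_cont.stronglyMeasurableAtFilter _ _) hg_cont.continuousAt
  have hF_mono : StrictMono F := by
    apply strictMono_of_deriv_pos
    intro x
    rw [(hF_deriv x).deriv]
    exact hg_pos x
  have hF_cont : Continuous F :=
    (Differentiable.continuous (fun x => (hF_deriv x).differentiableAt))
  -- F bounds
  have hF_lb : ∀ x : ℝ, a₀ ≤ x → m * (x - a₀) ≤ F x := by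
    intro x hx
    have h1 : ∫ s in a₀..x, m ≤ ∫ s in a₀..x, g s :=
      intervalIntegral.integral_mono_on hx (intervalIntegrable_const)
        (hg_cont.intervalIntegrable _ _) (fun s _ => hg_ge s)
    rwa [intervalIntegral.integral_const, smul_eq_mul, mul_comm] at h1
  have hF_ub : ∀ x : ℝ, x ≤ a₀ → F x ≤ m * (x - a₀) := by
    intro x hx
    have h1 : ∫ s in x..a₀, m ≤ ∫ s in x..a₀, g s :=
      intervalIntegral.integral_mono_on hx (intervalIntegrable_const)
        (hg_cont.intervalIntegrable _ _) (fun s _ => hg_ge s)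
    rw [intervalIntegral.integral_const, smul_eq_mul] at h1
    have h2 : F x = -∫ s in x..a₀, g s := by
      rw [hFdef]
      simp [intervalIntegral.integral_symm a₀ x]
    rw [h2]
    nlinarith
  have htop : Tendsto F atTop atTop := by
    apply tendsto_atTop_mono' atTop (f₁ := fun x => m * (x - a₀))
    · filter_upwards [eventually_ge_atTop a₀] with x hx using hF_lb x hx
    · exact (tendsto_atTop_add_const_right _ (-a₀) tendsto_id).const_mul_atTop hm_pos
  have hbot : Tendsto F atBot atBot := by
    apply tendsto_atBot_mono' atBot (f₁ := fun x => m * (x - a₀))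
    · filter_upwards [eventually_le_atBot a₀] with x hx using hF_ub x hx
    · exact Tendsto.const_mul_atBot hm_pos (tendsto_atBot_add_const_right _ (-a₀) tendsto_id)
  have hsurj : Function.Surjective F := hF_cont.surjective htop hbot
  -- the inverse
  set A := (StrictMono.orderIsoOfSurjective F hF_mono hsurj).symm with hAdef
  set a : ℝ → ℝ := fun t => A t with hadef
  have ha_cont : Continuous a := A.continuous
  have hFa : ∀ t : ℝ, F (a t) = t := by
    intro t
    exact (StrictMono.orderIsoOfSurjective F hF_mono hsurj).apply_symm_apply t
  have hFa₀ : F a₀ = 0 := by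
    simp [hFdef]
  have ha0 : a 0 = a₀ := by
    apply hF_mono.injective
    rw [hFa 0, hFa₀]
  have ha_mono : StrictMono a := fun s t hst => A.lt_iff_lt.2 hst
  have ha_ge : ∀ t : ℝ, 0 ≤ t → a₀ ≤ a t := by
    intro t ht
    rw [← ha0]
    exact ha_mono.monotone ht
  have ha_pos : ∀ t : ℝ, 0 ≤ t → 0 < a t := fun t ht => lt_of_lt_of_le ha₀ (ha_ge t ht)
  -- derivative of a
  have hda : ∀ t : ℝ, HasDerivAt a (g (a t))⁻¹ t := by
    intro t
    exact HasDerivAt.of_local_left_inverse (ha_cont.continuousAt)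
      (hF_deriv (a t)) (hg_pos (a t)).ne' (Filter.Eventually.of_forall hFa)
  set a' : ℝ → ℝ := fun t => Real.sqrt (K + 2 * β / a t) with ha'def
  have hga : ∀ t : ℝ, 0 ≤ t → (g (a t))⁻¹ = a' t := by
    intro t ht
    rw [hgdef, ha'def]
    simp only [inv_inv]
    rw [max_eq_left (ha_ge t ht)]
  have hinner_a_pos : ∀ t : ℝ, 0 ≤ t → 0 < K + 2 * β / a t := by
    intro t ht
    have := ha_pos t ht
    exact add_pos hK (by positivity)
  have ha'_pos : ∀ t : ℝ, 0 ≤ t → 0 < a' t := by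
    intro t ht
    exact Real.sqrt_pos.2 (hinner_a_pos t ht)
  have ha'0 : a' 0 = a₁ := by
    rw [ha'def]
    simp only
    rw [ha0, hKfrac, Real.sqrt_sq ha₁pos.le]
  have hda_within : ∀ t ∈ Ici (0:ℝ), HasDerivWithinAt a (a' t) (Ici 0) t := by
    intro t ht
    have := (hda t).hasDerivWithinAt (s := Ici (0:ℝ))
    rwa [hga t ht] at this
  have hda' : ∀ t ∈ Ici (0:ℝ), HasDerivWithinAt a' (-β / (a t)^2) (Ici 0) t := by
    intro t ht
    have hat := ha_pos t ht
    have h1 : HasDerivWithinAt (fun u => (a u)⁻¹) (-(a' t)/(a t)^2) (Ici 0) t :=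
      (hda_within t ht).inv hat.ne'
    have h2 : HasDerivWithinAt (fun u => K + 2*β/(a u)) (2*β * (-(a' t)/(a t)^2)) (Ici 0) t := by
      simpa only [div_eq_mul_inv] using ((h1.const_mul (2*β)).const_add K)
    have h3 := h2.sqrt (hinner_a_pos t ht).ne'
    have hsq : Real.sqrt (K + 2*β / a t) = a' t := rfl
    rw [hsq] at h3
    have hval : 2*β * (-(a' t)/(a t)^2) / (2 * a' t) = -β / (a t)^2 := by
      have h4 := (ha'_pos t ht).ne'
      have h5 := hat.ne'
      field_simp
    rw [hval] at h3
    exact h3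
  refine ⟨a, a', fun t => -β / (a t)^2, ha0, ha'0, ?_, fun t ht => ⟨ha_pos t ht, hda_within t ht, hda' t ht, ?_⟩⟩
  · exact ContinuousOn.div continuousOn_const ((ha_cont.continuousOn).pow 2)
      (fun t ht => pow_ne_zero 2 (ha_pos t ht).ne')
  · have h5 := (ha_pos t ht).ne'
    rw [hβdef]
    field_simp


lemma asymptotics (Λ a₀ a₁ : ℝ) (hΛ : 0 < Λ) (ha₀ : 0 < a₀)
    (ha₁ : Real.sqrt (2 * Λ / (3 * a₀)) < a₁)
    (a a' a'' : ℝ → ℝ) (h0 : a 0 = a₀) (h1 : a' 0 = a₁)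
    (H : ∀ t ∈ Ici (0:ℝ),
        0 < a t ∧
        HasDerivWithinAt a (a' t) (Ici 0) t ∧
        HasDerivWithinAt a' (a'' t) (Ici 0) t ∧
        (a t) ^ 2 * a'' t = -Λ / 3) :
    0 < Real.sqrt (a₁ ^ 2 - 2 * Λ / (3 * a₀)) ∧
      Tendsto (fun t => a t / t) atTop (nhds (Real.sqrt (a₁ ^ 2 - 2 * Λ / (3 * a₀)))) ∧
      ∃ c₁ > (0:ℝ), ∃ c₂ > (0:ℝ),
        Tendsto (fun t => a t / (c₁ * (1 + c₂ * t))) atTop (nhds 1) := by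
  have ha₁pos : 0 < a₁ := lt_of_le_of_lt (Real.sqrt_nonneg _) ha₁
  have hfrac : 0 < 2 * Λ / (3 * a₀) := by positivity
  have hK : 0 < a₁ ^ 2 - 2 * Λ / (3 * a₀) := by
    have := Real.sq_sqrt hfrac.le
    nlinarith [Real.sqrt_nonneg (2 * Λ / (3 * a₀))]
  set K : ℝ := a₁ ^ 2 - 2 * Λ / (3 * a₀) with hKdef
  set L : ℝ := Real.sqrt K with hLdef
  have hL : 0 < L := Real.sqrt_pos.2 hK
  have hL2 : L ^ 2 = K := Real.sq_sqrt hK.le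
  have hpos : ∀ t ∈ Ici (0:ℝ), 0 < a t := fun t ht => (H t ht).1
  have hda : ∀ t ∈ Ici (0:ℝ), HasDerivWithinAt a (a' t) (Ici 0) t := fun t ht => (H t ht).2.1
  have hda' : ∀ t ∈ Ici (0:ℝ), HasDerivWithinAt a' (a'' t) (Ici 0) t := fun t ht => (H t ht).2.2.1
  have hode : ∀ t ∈ Ici (0:ℝ), a'' t = -(Λ/3) / (a t)^2 := by
    intro t ht
    have h2 := (H t ht).2.2.2
    have h3 := (hpos t ht).ne'
    field_simp
    linarith [h2]
  have h_at : ∀ t : ℝ, 0 < t → HasDerivAt a (a' t) t :=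
    fun t ht => (hda t ht.le).hasDerivAt (Ici_mem_nhds ht)
  have h_at' : ∀ t : ℝ, 0 < t → HasDerivAt a' (a'' t) t :=
    fun t ht => (hda' t ht.le).hasDerivAt (Ici_mem_nhds ht)
  have hca : ContinuousOn a (Ici 0) := fun t ht => (hda t ht).continuousWithinAt
  have hca' : ContinuousOn a' (Ici 0) := fun t ht => (hda' t ht).continuousWithinAt
  -- energy conservation
  set φ : ℝ → ℝ := fun t => a' t ^ 2 - 2 * (Λ/3) * (a t)⁻¹ with hφdef
  have hφc : ContinuousOn φ (Ici 0) := by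
    apply ContinuousOn.sub (hca'.pow 2)
    exact ContinuousOn.mul continuousOn_const (hca.inv₀ (fun t ht => (hpos t ht).ne'))
  have hφd : ∀ x ∈ Ici (0:ℝ), HasDerivWithinAt φ 0 (Ici 0) x := by
    intro x hx
    have h1 : HasDerivWithinAt (fun u => a' u ^ 2) (2 * a' x ^ 1 * a'' x) (Ici 0) x :=
      (hda' x hx).pow 2
    have h2 : HasDerivWithinAt (fun u => 2 * (Λ/3) * (a u)⁻¹)
        (2 * (Λ/3) * (-(a' x) / (a x)^2)) (Ici 0) x :=
      ((hda x hx).inv (hpos x hx).ne').const_mul (2 * (Λ/3))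
    have h3 := h1.sub h2
    have hval : 2 * a' x ^ 1 * a'' x - 2 * (Λ/3) * (-(a' x) / (a x)^2) = 0 := by
      rw [hode x hx]
      have := (hpos x hx).ne'
      field_simp
      ring
    rwa [hval] at h3
  have hφconst : ∀ t ∈ Ici (0:ℝ), φ t = φ 0 := by
    intro t ht
    refine constant_of_has_deriv_right_zero (hφc.mono (Icc_subset_Ici_self)) ?_ t
      (right_mem_Icc.2 ht)
    intro x hx
    exact (hφd x hx.1).mono (Ici_subset_Ici.2 hx.1)
  have hφ0 : φ 0 = K := by
    rw [hφdef]
    simp only [h0, h1]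
    rw [hKdef]
    field_simp
  have henergy : ∀ t ∈ Ici (0:ℝ), a' t ^ 2 = K + 2 * (Λ/3) * (a t)⁻¹ := by
    intro t ht
    have := hφconst t ht
    rw [hφ0] at this
    rw [hφdef] at this
    simp only at this
    linarith
  have henergy' : ∀ t ∈ Ici (0:ℝ), L ^ 2 < a' t ^ 2 := by
    intro t ht
    rw [henergy t ht, hL2]
    have := hpos t ht
    have : 0 < 2 * (Λ/3) * (a t)⁻¹ := by positivity
    linarith
  have ha₁L : L < a₁ := by
    apply lt_of_pow_lt_pow_left₀ 2 ha₁pos.le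
    rw [hL2]
    have : 0 < 2 * Λ / (3 * a₀) := hfrac
    rw [hKdef]; linarith
  -- a' stays above L
  have ha'gt : ∀ t ∈ Ici (0:ℝ), L < a' t := by
    intro t ht
    by_contra hcon
    push_neg at hcon
    have hL_mem : L ∈ Icc (a' t) (a' 0) := ⟨hcon, by rw [h1]; exact ha₁L.le⟩
    obtain ⟨s, hs, hsL⟩ := intermediate_value_Icc' ht (hca'.mono (Icc_subset_Ici_self)) hL_mem
    have := henergy' s (hs.1)
    rw [hsL] at this
    exact lt_irrefl _ this
  have ha'pos : ∀ t ∈ Ici (0:ℝ), 0 < a' t := fun t ht => lt_trans hL (ha'gt t ht)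
  -- lower bound: a t ≥ a₀ + L t
  have hlow : ∀ t ∈ Ici (0:ℝ), a₀ + L * t ≤ a t := by
    intro t ht
    have hmono : MonotoneOn (fun u => a u - L * u) (Ici 0) := by
      apply monotoneOn_of_deriv_nonneg (convex_Ici 0)
        (hca.sub (continuous_const.mul continuous_id).continuousOn)
      · intro x hx
        rw [interior_Ici] at hx
        exact ((h_at x hx).sub ((hasDerivAt_id x).const_mul L)).differentiableAt.differentiableWithinAt
      · intro x hx
        rw [interior_Ici] at hx
        have hd := (h_at x hx).sub ((hasDerivAt_id x).const_mul L)
        rw [show deriv (a - (fun x => √K) * id) x = deriv (a - fun y => L * id y) x from rfl, hd.deriv]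
        simp only [mul_one]
        linarith [ha'gt x (mem_Ici.2 (le_of_lt hx))]
    have := hmono (self_mem_Ici) ht ht
    simp only [h0, mul_zero, sub_zero] at this
    linarith
  have ha_top : Tendsto a atTop atTop := by
    apply tendsto_atTop_mono' atTop (f₁ := fun t => a₀ + L * t)
    · filter_upwards [eventually_ge_atTop (0:ℝ)] with t ht using hlow t ht
    · exact tendsto_atTop_add_const_left _ _ (tendsto_id.const_mul_atTop hL)
  -- a' tends to L
  have ha'_tendsto : Tendsto a' atTop (𝓝 L) := by
    have h2 : Tendsto (fun t => K + 2 * (Λ/3) * (a t)⁻¹) atTop (𝓝 K) := by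
      have := (ha_top.inv_tendsto_atTop.const_mul (2 * (Λ/3))).const_add K
      simpa using this
    have h3 : Tendsto (fun t => Real.sqrt (K + 2 * (Λ/3) * (a t)⁻¹)) atTop (𝓝 L) := by
      rw [hLdef]
      exact (Real.continuous_sqrt.tendsto K).comp h2
    apply h3.congr'
    filter_upwards [eventually_ge_atTop (0:ℝ)] with t ht
    rw [← henergy t ht, Real.sqrt_sq (ha'pos t ht).le]
  -- a' is antitone
  have hanti : AntitoneOn a' (Ici 0) := by
    apply antitoneOn_of_deriv_nonpos (convex_Ici 0) hca'
    · intro x hx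
      rw [interior_Ici] at hx
      exact (h_at' x hx).differentiableAt.differentiableWithinAt
    · intro x hx
      rw [interior_Ici] at hx
      rw [(h_at' x hx).deriv, hode x (mem_Ici.2 (le_of_lt hx))]
      have := hpos x (mem_Ici.2 (le_of_lt hx))
      have h4 : 0 < (a x)^2 := by positivity
      have h5 : 0 < Λ/3 := by linarith
      exact le_of_lt (div_neg_of_neg_of_pos (by linarith) h4)
  -- main limit
  have hmain : Tendsto (fun t => a t / t) atTop (𝓝 L) := by
    rw [tendsto_order]
    constructor
    · intro b hb
      filter_upwards [eventually_gt_atTop (0:ℝ)] with t ht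
      rw [lt_div_iff₀ ht]
      have := hlow t ht.le
      nlinarith
    · intro b hb
      set ε := (b - L) / 2 with hεdef
      have hε : 0 < ε := by rw [hεdef]; linarith
      have hev := (tendsto_order.1 ha'_tendsto).2 (L + ε) (by linarith)
      obtain ⟨T, ⟨hT1, hT0⟩⟩ := (hev.and (eventually_ge_atTop (0:ℝ))).exists
      -- χ antitone on Ici T
      have hanti2 : AntitoneOn (fun u => a u - (L + ε) * u) (Ici T) := by
        apply antitoneOn_of_deriv_nonpos (convex_Ici T)
          ((hca.mono (Ici_subset_Ici.2 hT0)).sub (continuous_const.mul continuous_id).continuousOn)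
        · intro x hx
          rw [interior_Ici] at hx
          have hx0 : 0 < x := lt_of_le_of_lt hT0 hx
          exact ((h_at x hx0).sub ((hasDerivAt_id x).const_mul (L + ε))).differentiableAt.differentiableWithinAt
        · intro x hx
          rw [interior_Ici] at hx
          have hx0 : 0 < x := lt_of_le_of_lt hT0 hx
          have hd := (h_at x hx0).sub ((hasDerivAt_id x).const_mul (L + ε))
          rw [show deriv (a - (fun x => L + ε) * id) x = deriv (a - fun y => (L + ε) * id y) x from rfl, hd.deriv]
          simp only [mul_one]
          have := hanti hT0 hx0.le (le_of_lt hx)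
          linarith
      have haT : 0 < a T := hpos T hT0
      filter_upwards [eventually_ge_atTop T, eventually_gt_atTop (max 0 (a T / ε))]
        with t ht1 ht2
      have ht0 : 0 < t := lt_of_le_of_lt (le_max_left _ _) ht2
      have h6 : a t - (L + ε) * t ≤ a T - (L + ε) * T := hanti2 (self_mem_Ici) ht1 ht1
      have h7 : a T < ε * t := by
        have := lt_of_le_of_lt (le_max_right 0 (a T / ε)) ht2
        rw [div_lt_iff₀ hε] at this
        linarith [this]
      rw [div_lt_iff₀ ht0]
      have h8 : 0 ≤ (L + ε) * T := mul_nonneg (by linarith) hT0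
      have hb2 : b = L + 2 * ε := by rw [hεdef]; ring
      nlinarith
  refine ⟨hL, hmain, L, hL, 1, one_pos, ?_⟩
  -- final asymptotics
  have h9 : Tendsto (fun t : ℝ => (t⁻¹ + 1)⁻¹) atTop (𝓝 1) := by
    have := (tendsto_inv_atTop_zero (𝕜 := ℝ)).add_const 1
    have h10 := this.inv₀ (by norm_num)
    simpa using h10
  have h11 : Tendsto (fun t => (a t / t) * ((t⁻¹ + 1)⁻¹ * L⁻¹)) atTop (𝓝 (L * (1 * L⁻¹))) :=
    hmain.mul (h9.mul tendsto_const_nhds)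
  rw [one_mul, mul_inv_cancel₀ hL.ne'] at h11
  apply h11.congr'
  filter_upwards [eventually_gt_atTop (0:ℝ)] with t ht
  have h12 : (1:ℝ) + t ≠ 0 := by positivity
  have h13 : t⁻¹ + 1 = (1 + t) / t := by field_simp
  rw [h13]
  rw [one_mul]
  field_simp

/-- Proposition (supercritical case of the separable collapse ODE `a²a'' = −Λ/3`):
for `Λ > 0`, `a₀ > 0` and `a₁ > √(2Λ/(3a₀))`, (a) there exists a twice continuously
differentiable positive solution on `[0,∞)` with the given initial data; (b) every
positive twice differentiable solution with this data satisfies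
`a(t)/t → √(a₁² − 2Λ/(3a₀)) > 0` as `t → ∞`, so that `a(t) ∼ c₁(1 + c₂t)`. -/
theorem supercritical_collapse_global
    (Λ a₀ a₁ : ℝ) (hΛ : 0 < Λ) (ha₀ : 0 < a₀)
    (ha₁ : Real.sqrt (2 * Λ / (3 * a₀)) < a₁) :
    (∃ a a' a'' : ℝ → ℝ,
      a 0 = a₀ ∧ a' 0 = a₁ ∧
      ContinuousOn a'' (Ici 0) ∧
      ∀ t ∈ Ici (0 : ℝ),
        0 < a t ∧
        HasDerivWithinAt a (a' t) (Ici 0) t ∧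
        HasDerivWithinAt a' (a'' t) (Ici 0) t ∧
        (a t) ^ 2 * a'' t = -Λ / 3) ∧
    (∀ a a' a'' : ℝ → ℝ,
      a 0 = a₀ → a' 0 = a₁ →
      (∀ t ∈ Ici (0 : ℝ),
        0 < a t ∧
        HasDerivWithinAt a (a' t) (Ici 0) t ∧
        HasDerivWithinAt a' (a'' t) (Ici 0) t ∧
        (a t) ^ 2 * a'' t = -Λ / 3) →
      0 < Real.sqrt (a₁ ^ 2 - 2 * Λ / (3 * a₀)) ∧
      Tendsto (fun t => a t / t) atTop (nhds (Real.sqrt (a₁ ^ 2 - 2 * Λ / (3 * a₀)))) ∧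
      ∃ c₁ > (0 : ℝ), ∃ c₂ > (0 : ℝ),
        Tendsto (fun t => a t / (c₁ * (1 + c₂ * t))) atTop (nhds 1)) :=
  ⟨exists_solution Λ a₀ a₁ hΛ ha₀ ha₁,
   fun a a' a'' h0 h1 H => asymptotics Λ a₀ a₁ hΛ ha₀ ha₁ a a' a'' h0 h1 H⟩
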